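/- Take a_n = 1/(100 n³) and N = 4. For every x ∈ [0,1) and every nonempty open interval U ⊆ [0,1), there exist an integer m ≥ 1 and a point y ∈ U with T^m(y) = x; that is, the set of preimages ⋃_{m≥1} T^{-m}(x) is dense in [0,1). -/

import Mathlib

open MeasureTheory Set Filter

noncomputable section

namespace Gouezel

/-- `b a n = 4 * ∑_{k=1}^n a_k` (left endpoints of the intervals `I_n`). -/
def b (a : ℕ → ℝ) (n : ℕ) : ℝ := 4 * ∑ k ∈ Finset.range n, a (k + 1)

/-- `b_∞ = 4 * ∑_{n=1}^∞ a_n`. -/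
def binf (a : ℕ → ℝ) : ℝ := 4 * ∑' n : ℕ, a (n + 1)

/-- The length `|J| = 1 - b_∞` of the interval `J = [b_∞, 1)`. -/
def lenJ (a : ℕ → ℝ) : ℝ := 1 - binf a

/-- `v_n'(x) = a_n (1 + 2 cos²(2π n⁴ x))`. -/
def vd (a : ℕ → ℝ) (n : ℕ) (x : ℝ) : ℝ :=
  a n * (1 + 2 * Real.cos (2 * Real.pi * (n : ℝ) ^ 4 * x) ^ 2)

/-- `w_n'(x) = a_n (1 + 2 sin²(2π n⁴ x))`. -/
def wd (a : ℕ → ℝ) (n : ℕ) (x : ℝ) : ℝ :=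
  a n * (1 + 2 * Real.sin (2 * Real.pi * (n : ℝ) ^ 4 * x) ^ 2)

/-- The inverse branch `v_n(x) = b_{n-1} + ∫_0^x v_n'(t) dt`. -/
def v (a : ℕ → ℝ) (n : ℕ) (x : ℝ) : ℝ := b a (n - 1) + ∫ t in (0:ℝ)..x, vd a n t

/-- The inverse branch `w_n(x) = b_{n-1} + 2 a_n + ∫_0^x w_n'(t) dt`. -/
def w (a : ℕ → ℝ) (n : ℕ) (x : ℝ) : ℝ :=
  b a (n - 1) + 2 * a n + ∫ t in (0:ℝ)..x, wd a n t

/-- The affine inverse branches `u_j(x) = b_∞ + (j-1)|J|/N + (|J|/N) x`, `1 ≤ j ≤ N`. -/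
def u (a : ℕ → ℝ) (N : ℕ) (j : ℕ) (x : ℝ) : ℝ :=
  binf a + ((j : ℝ) - 1) * (lenJ a / N) + (lenJ a / N) * x

/-- The transfer operator on complex-valued functions. -/
def L (a : ℕ → ℝ) (N : ℕ) (f : ℝ → ℂ) (x : ℝ) : ℂ :=
  (∑' n : ℕ, ((vd a (n + 1) x : ℂ) * f (v a (n + 1) x)
      + (wd a (n + 1) x : ℂ) * f (w a (n + 1) x)))
    + ((lenJ a / (N : ℝ) : ℝ) : ℂ) * ∑ j ∈ Finset.range N, f (u a N (j + 1) x)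

/-- The transfer operator on real-valued functions. -/
def LR (a : ℕ → ℝ) (N : ℕ) (f : ℝ → ℝ) (x : ℝ) : ℝ :=
  (∑' n : ℕ, (vd a (n + 1) x * f (v a (n + 1) x) + wd a (n + 1) x * f (w a (n + 1) x)))
    + (lenJ a / N) * ∑ j ∈ Finset.range N, f (u a N (j + 1) x)

/-- The part `L_n` of the transfer operator coming from the branches `v_n, w_n`. -/
def Ln (a : ℕ → ℝ) (n : ℕ) (f : ℝ → ℂ) (x : ℝ) : ℂ :=
  (vd a n x : ℂ) * f (v a n x) + (wd a n x : ℂ) * f (w a n x)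

/-- Sup norm of `f` on `[0,1)`. -/
def supNorm (f : ℝ → ℂ) : ℝ := ⨆ x : Ico (0:ℝ) 1, ‖f x.1‖

/-- Best Lipschitz constant of `f` on `[0,1)` (the term at `x = y` is `0/0 = 0`). -/
def lipConst (f : ℝ → ℂ) : ℝ :=
  ⨆ p : Ico (0:ℝ) 1 × Ico (0:ℝ) 1, ‖f p.1.1 - f p.2.1‖ / |p.1.1 - p.2.1|

/-- Lipschitz norm `‖f‖_Lip = sup|f| + Lip(f)` on `[0,1)`. -/
def lipNorm (f : ℝ → ℂ) : ℝ := supNorm f + lipConst f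

/-- `f` is bounded and Lipschitz on `[0,1)`. -/
def BddLip (f : ℝ → ℂ) : Prop :=
  ∃ K : ℝ, (∀ x ∈ Ico (0:ℝ) 1, ‖f x‖ ≤ K) ∧
    ∀ x ∈ Ico (0:ℝ) 1, ∀ y ∈ Ico (0:ℝ) 1, ‖f x - f y‖ ≤ K * |x - y|

/-- The specific choice `a_n = 1/(100 n³)`. -/
def aa (n : ℕ) : ℝ := 1 / (100 * (n : ℝ) ^ 3)

/-- Standing hypotheses on the sequence `(a_n)`: positivity and `∑ a_n < 1/4`. -/
def StdHyp (a : ℕ → ℝ) : Prop :=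
  (∀ n : ℕ, 1 ≤ n → 0 < a n) ∧ Summable (fun n : ℕ => a (n + 1)) ∧
    (∑' n : ℕ, a (n + 1)) < 1 / 4

/-- `T : [0,1) → [0,1)` has the maps `v_n, w_n` (`n ≥ 1`) and `u_j` (`1 ≤ j ≤ N`)
as inverse branches. -/
def InverseBranches (a : ℕ → ℝ) (N : ℕ) (T : ℝ → ℝ) : Prop :=
  MapsTo T (Ico (0:ℝ) 1) (Ico (0:ℝ) 1) ∧
    ∀ x ∈ Ico (0:ℝ) 1,
      (∀ n : ℕ, 1 ≤ n → T (v a n x) = x ∧ T (w a n x) = x) ∧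
      (∀ j : ℕ, 1 ≤ j → j ≤ N → T (u a N j x) = x)

open Real

lemma v_eq (a : ℕ → ℝ) {n : ℕ} (hn : 1 ≤ n) (x : ℝ) :
    v a n x = b a (n-1) + a n * (2 * x +
      sin (2*π*(n:ℝ)^4*x) * cos (2*π*(n:ℝ)^4*x) / (2*π*(n:ℝ)^4)) := by
  have hn0 : (0:ℝ) < (n:ℝ) := by exact_mod_cast hn
  have hc : (0:ℝ) < 2*π*(n:ℝ)^4 := by positivity
  set c := 2*π*(n:ℝ)^4 with hcdef
  have h1 : (∫ t in (0:ℝ)..x, vd a n t)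
      = a n * ∫ t in (0:ℝ)..x, (1 + 2 * cos (c*t)^2) := by
    simp only [vd, ← hcdef]
    rw [intervalIntegral.integral_const_mul]
  have h2 : (∫ t in (0:ℝ)..x, (1 + 2 * cos (c*t)^2))
      = (x - 0) + 2 * (c⁻¹ * ((cos (c*x) * sin (c*x) - cos (c*0) * sin (c*0) + c*x - c*0)/2)) := by
    rw [intervalIntegral.integral_add intervalIntegrable_const ((by continuity : Continuous fun t : ℝ => 2 * cos (c*t)^2).intervalIntegrable _ _),
      intervalIntegral.integral_const, intervalIntegral.integral_const_mul,
      intervalIntegral.integral_comp_mul_left (fun t => cos t ^ 2) hc.ne',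
      integral_cos_sq]
    simp [smul_eq_mul]
  rw [v, h1, h2]
  have : sin (c * 0) = 0 := by simp
  field_simp
  simp only [zero_mul, Real.sin_zero]; ring

lemma w_eq (a : ℕ → ℝ) {n : ℕ} (hn : 1 ≤ n) (x : ℝ) :
    w a n x = b a (n-1) + 2 * a n + a n * (2 * x -
      sin (2*π*(n:ℝ)^4*x) * cos (2*π*(n:ℝ)^4*x) / (2*π*(n:ℝ)^4)) := by
  have hn0 : (0:ℝ) < (n:ℝ) := by exact_mod_cast hn
  have hc : (0:ℝ) < 2*π*(n:ℝ)^4 := by positivity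
  set c := 2*π*(n:ℝ)^4 with hcdef
  have h1 : (∫ t in (0:ℝ)..x, wd a n t)
      = a n * ∫ t in (0:ℝ)..x, (1 + 2 * sin (c*t)^2) := by
    simp only [wd, ← hcdef]
    rw [intervalIntegral.integral_const_mul]
  have h2 : (∫ t in (0:ℝ)..x, (1 + 2 * sin (c*t)^2))
      = (x - 0) + 2 * (c⁻¹ * ((sin (c*0) * cos (c*0) - sin (c*x) * cos (c*x) + c*x - c*0)/2)) := by
    rw [intervalIntegral.integral_add intervalIntegrable_const ((by continuity : Continuous fun t : ℝ => 2 * sin (c*t)^2).intervalIntegrable _ _),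
      intervalIntegral.integral_const, intervalIntegral.integral_const_mul,
      intervalIntegral.integral_comp_mul_left (fun t => sin t ^ 2) hc.ne',
      integral_sin_sq]
    simp [smul_eq_mul]
  rw [w, h1, h2]
  have : sin (c * 0) = 0 := by simp
  field_simp
  simp only [zero_mul, Real.sin_zero]; ring

lemma aa_pos {n : ℕ} (hn : 1 ≤ n) : 0 < aa n := by
  have : (0:ℝ) < (n:ℝ) := by exact_mod_cast hn
  unfold aa; positivity

lemma aa_le {n : ℕ} (hn : 1 ≤ n) : aa n ≤ 1/100 := by
  have h : (1:ℝ) ≤ (n:ℝ) := by exact_mod_cast hn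
  have h3 : (1:ℝ) ≤ (n:ℝ)^3 := by
    calc (1:ℝ) = 1^3 := by norm_num
      _ ≤ (n:ℝ)^3 := pow_le_pow_left₀ (by norm_num) h 3
  rw [aa]
  apply one_div_le_one_div_of_le (by norm_num)
  linarith

lemma hasSum_tele : HasSum (fun n : ℕ => 1/((n:ℝ)+1) - 1/((n:ℝ)+2)) 1 := by
  have h0 : ∀ n : ℕ, (0:ℝ) ≤ 1/((n:ℝ)+1) - 1/((n:ℝ)+2) := by
    intro n
    have h1 : (0:ℝ) < (n:ℝ)+1 := by positivity
    have := one_div_le_one_div_of_le h1 (by linarith : (n:ℝ)+1 ≤ (n:ℝ)+2)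
    linarith
  rw [hasSum_iff_tendsto_nat_of_nonneg h0]
  have hts : ∀ n : ℕ, ∑ i ∈ Finset.range n, (1/((i:ℝ)+1) - 1/((i:ℝ)+2))
      = 1 - 1/((n:ℝ)+1) := by
    intro n
    calc ∑ i ∈ Finset.range n, (1/((i:ℝ)+1) - 1/((i:ℝ)+2))
        = ∑ i ∈ Finset.range n,
            ((fun i : ℕ => 1/((i:ℝ)+1)) i - (fun i : ℕ => 1/((i:ℝ)+1)) (i+1)) := by
          apply Finset.sum_congr rfl
          intro i _
          push_cast
          ring
      _ = (fun i : ℕ => 1/((i:ℝ)+1)) 0 - (fun i : ℕ => 1/((i:ℝ)+1)) n :=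
          Finset.sum_range_sub' _ n
      _ = 1 - 1/((n:ℝ)+1) := by norm_num
  simp only [hts]
  have h := (tendsto_const_nhds (x := (1:ℝ)) (f := atTop)).sub
    tendsto_one_div_add_atTop_nhds_zero_nat
  simpa using h

lemma aa_succ_le (n : ℕ) : aa (n+1) ≤ (1/50) * (1/((n:ℝ)+1) - 1/((n:ℝ)+2)) := by
  have h1 : (0:ℝ) < (n:ℝ)+1 := by positivity
  have h2 : (0:ℝ) < (n:ℝ)+2 := by positivity
  have hn0 : (0:ℝ) ≤ (n:ℝ) := n.cast_nonneg
  have key : 1/((n:ℝ)+1) - 1/((n:ℝ)+2) = 1/(((n:ℝ)+1)*((n:ℝ)+2)) := by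
    field_simp
    ring
  rw [key, aa, div_mul_div_comm, one_mul]
  push_cast
  apply one_div_le_one_div_of_le (by positivity)
  nlinarith [pow_nonneg hn0 3, sq_nonneg ((n:ℝ)), hn0]

lemma summable_aa : Summable (fun n : ℕ => aa (n + 1)) := by
  apply Summable.of_nonneg_of_le (fun n => (aa_pos (n.succ_pos)).le) aa_succ_le
  exact (hasSum_tele.mul_left (1/50)).summable

lemma tsum_aa_le : (∑' n : ℕ, aa (n+1)) ≤ 1/50 := by
  have h := Summable.tsum_le_tsum aa_succ_le summable_aa (hasSum_tele.mul_left (1/50)).summable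
  calc (∑' n : ℕ, aa (n+1)) ≤ ∑' n : ℕ, (1/50) * (1/((n:ℝ)+1) - 1/((n:ℝ)+2)) := h
    _ = 1/50 := by rw [(hasSum_tele.mul_left (1/50)).tsum_eq]; norm_num

lemma binf_nonneg : 0 ≤ binf aa := by
  have : 0 ≤ ∑' n : ℕ, aa (n+1) := tsum_nonneg (fun n => (aa_pos (n.succ_pos)).le)
  rw [binf]; linarith

lemma binf_le : binf aa ≤ 2/25 := by
  have := tsum_aa_le
  rw [binf]; linarith

lemma lenJ_pos : 0 < lenJ aa := by rw [lenJ]; have := binf_le; linarith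
lemma lenJ_le_one : lenJ aa ≤ 1 := by rw [lenJ]; have := binf_nonneg; linarith

lemma b_nonneg (n : ℕ) : 0 ≤ b aa n := by
  rw [b]
  have : 0 ≤ ∑ k ∈ Finset.range n, aa (k+1) :=
    Finset.sum_nonneg (fun k _ => (aa_pos k.succ_pos).le)
  linarith

lemma b_le_binf (n : ℕ) : b aa n ≤ binf aa := by
  rw [b, binf]
  have := Summable.sum_le_tsum (Finset.range n) (fun k _ => (aa_pos k.succ_pos).le) summable_aa
  linarith

lemma b_succ {n : ℕ} (hn : 1 ≤ n) : b aa n = b aa (n-1) + 4 * aa n := by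
  cases n with
  | zero => exact absurd hn (by norm_num)
  | succ m =>
    simp only [b, Nat.succ_sub_one, Finset.sum_range_succ]
    ring

lemma tendsto_b : Tendsto (b aa) atTop (nhds (binf aa)) := by
  have h := summable_aa.hasSum.tendsto_sum_nat
  exact h.const_mul 4

lemma sin_lip (x y : ℝ) : |Real.sin x - Real.sin y| ≤ |x - y| := by
  rw [Real.sin_sub_sin, abs_mul, abs_mul, abs_two]
  have h1 : |Real.sin ((x-y)/2)| ≤ |(x-y)/2| := Real.abs_sin_le_abs
  have h2 : |Real.cos ((x+y)/2)| ≤ 1 := Real.abs_cos_le_one _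
  have h3 : |(x-y)/2| = |x-y|/2 := by rw [abs_div, abs_two]
  nlinarith [abs_nonneg (Real.sin ((x-y)/2)), abs_nonneg ((x-y)/2),
    abs_nonneg (Real.cos ((x+y)/2))]

lemma sincos_lip (x y : ℝ) :
    |Real.sin x * Real.cos x - Real.sin y * Real.cos y| ≤ |x - y| := by
  have h : ∀ r : ℝ, Real.sin r * Real.cos r = Real.sin (2*r) / 2 := by
    intro r; rw [Real.sin_two_mul]; ring
  rw [h, h, div_sub_div_same, abs_div, abs_of_pos (by norm_num : (0:ℝ) < 2)]
  have := sin_lip (2*x) (2*y)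
  have h2 : |2*x - 2*y| = 2 * |x - y| := by
    rw [show 2*x-2*y = 2*(x-y) by ring, abs_mul, abs_two]
  linarith

lemma v_lb {n : ℕ} (hn : 1 ≤ n) {x y : ℝ} (hxy : x ≤ y) :
    aa n * (y - x) ≤ v aa n y - v aa n x := by
  have hn0 : (0:ℝ) < (n:ℝ) := by exact_mod_cast hn
  have hc : (0:ℝ) < 2*π*(n:ℝ)^4 := by positivity
  have ha := aa_pos hn
  rw [v_eq aa hn, v_eq aa hn]
  set c := 2*π*(n:ℝ)^4
  have hs : |sin (c*y) * cos (c*y) - sin (c*x) * cos (c*x)| ≤ c*(y-x) := by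
    have := sincos_lip (c*y) (c*x)
    have h2 : |c*y - c*x| = c*(y-x) := by
      rw [show c*y - c*x = c*(y-x) by ring, abs_mul, abs_of_pos hc,
        abs_of_nonneg (by linarith : (0:ℝ) ≤ y - x)]
    linarith
  have hd : -(y-x) ≤ (sin (c*y) * cos (c*y) - sin (c*x) * cos (c*x))/c := by
    rw [le_div_iff₀ hc]
    have := (abs_le.1 hs).1
    nlinarith
  have expand : b aa (n-1) + aa n * (2*y + sin (c*y) * cos (c*y)/c)
      - (b aa (n-1) + aa n * (2*x + sin (c*x) * cos (c*x)/c))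
      = aa n * (2*(y-x) + (sin (c*y) * cos (c*y) - sin (c*x) * cos (c*x))/c) := by
    field_simp
    ring
  rw [expand]
  nlinarith

lemma v_lip {n : ℕ} (hn : 1 ≤ n) (x y : ℝ) :
    |v aa n y - v aa n x| ≤ 3 * aa n * |y - x| := by
  have hn0 : (0:ℝ) < (n:ℝ) := by exact_mod_cast hn
  have hc : (0:ℝ) < 2*π*(n:ℝ)^4 := by positivity
  have ha := aa_pos hn
  rw [v_eq aa hn, v_eq aa hn]
  set c := 2*π*(n:ℝ)^4
  have hs : |sin (c*y) * cos (c*y) - sin (c*x) * cos (c*x)| ≤ c*|y-x| := by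
    have := sincos_lip (c*y) (c*x)
    have h2 : |c*y - c*x| = c*|y-x| := by
      rw [show c*y - c*x = c*(y-x) by ring, abs_mul, abs_of_pos hc]
    linarith
  have hd : |(sin (c*y) * cos (c*y) - sin (c*x) * cos (c*x))/c| ≤ |y-x| := by
    rw [abs_div, abs_of_pos hc, div_le_iff₀ hc]
    linarith [hs]
  have expand : b aa (n-1) + aa n * (2*y + sin (c*y) * cos (c*y)/c)
      - (b aa (n-1) + aa n * (2*x + sin (c*x) * cos (c*x)/c))
      = aa n * (2*(y-x) + (sin (c*y) * cos (c*y) - sin (c*x) * cos (c*x))/c) := by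
    field_simp
    ring
  rw [expand, abs_mul, abs_of_pos ha]
  have h3 : |2*(y-x) + (sin (c*y) * cos (c*y) - sin (c*x) * cos (c*x))/c|
      ≤ 2*|y-x| + |y-x| := by
    calc |2*(y-x) + (sin (c*y) * cos (c*y) - sin (c*x) * cos (c*x))/c|
        ≤ |2*(y-x)| + |(sin (c*y) * cos (c*y) - sin (c*x) * cos (c*x))/c| := abs_add_le _ _
      _ ≤ 2*|y-x| + |y-x| := by
          rw [abs_mul, abs_two]
          linarith [hd]
  nlinarith [abs_nonneg (y - x)]

lemma w_lb {n : ℕ} (hn : 1 ≤ n) {x y : ℝ} (hxy : x ≤ y) :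
    aa n * (y - x) ≤ w aa n y - w aa n x := by
  have hn0 : (0:ℝ) < (n:ℝ) := by exact_mod_cast hn
  have hc : (0:ℝ) < 2*π*(n:ℝ)^4 := by positivity
  have ha := aa_pos hn
  rw [w_eq aa hn, w_eq aa hn]
  set c := 2*π*(n:ℝ)^4
  have hs : |sin (c*y) * cos (c*y) - sin (c*x) * cos (c*x)| ≤ c*(y-x) := by
    have := sincos_lip (c*y) (c*x)
    have h2 : |c*y - c*x| = c*(y-x) := by
      rw [show c*y - c*x = c*(y-x) by ring, abs_mul, abs_of_pos hc,
        abs_of_nonneg (by linarith : (0:ℝ) ≤ y - x)]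
    linarith
  have hd : (sin (c*y) * cos (c*y) - sin (c*x) * cos (c*x))/c ≤ (y-x) := by
    rw [div_le_iff₀ hc]
    have := (abs_le.1 hs).2
    nlinarith
  have expand : b aa (n-1) + 2*aa n + aa n * (2*y - sin (c*y) * cos (c*y)/c)
      - (b aa (n-1) + 2*aa n + aa n * (2*x - sin (c*x) * cos (c*x)/c))
      = aa n * (2*(y-x) - (sin (c*y) * cos (c*y) - sin (c*x) * cos (c*x))/c) := by
    field_simp
    ring
  rw [expand]
  nlinarith

lemma w_lip {n : ℕ} (hn : 1 ≤ n) (x y : ℝ) :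
    |w aa n y - w aa n x| ≤ 3 * aa n * |y - x| := by
  have hn0 : (0:ℝ) < (n:ℝ) := by exact_mod_cast hn
  have hc : (0:ℝ) < 2*π*(n:ℝ)^4 := by positivity
  have ha := aa_pos hn
  rw [w_eq aa hn, w_eq aa hn]
  set c := 2*π*(n:ℝ)^4
  have hs : |sin (c*y) * cos (c*y) - sin (c*x) * cos (c*x)| ≤ c*|y-x| := by
    have := sincos_lip (c*y) (c*x)
    have h2 : |c*y - c*x| = c*|y-x| := by
      rw [show c*y - c*x = c*(y-x) by ring, abs_mul, abs_of_pos hc]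
    linarith
  have hd : |(sin (c*y) * cos (c*y) - sin (c*x) * cos (c*x))/c| ≤ |y-x| := by
    rw [abs_div, abs_of_pos hc, div_le_iff₀ hc]
    linarith [hs]
  have expand : b aa (n-1) + 2*aa n + aa n * (2*y - sin (c*y) * cos (c*y)/c)
      - (b aa (n-1) + 2*aa n + aa n * (2*x - sin (c*x) * cos (c*x)/c))
      = aa n * (2*(y-x) - (sin (c*y) * cos (c*y) - sin (c*x) * cos (c*x))/c) := by
    field_simp
    ring
  rw [expand, abs_mul, abs_of_pos ha]
  have h3 : |2*(y-x) - (sin (c*y) * cos (c*y) - sin (c*x) * cos (c*x))/c|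
      ≤ 2*|y-x| + |y-x| := by
    calc |2*(y-x) - (sin (c*y) * cos (c*y) - sin (c*x) * cos (c*x))/c|
        ≤ |2*(y-x)| + |(sin (c*y) * cos (c*y) - sin (c*x) * cos (c*x))/c| := abs_sub _ _
      _ ≤ 2*|y-x| + |y-x| := by
          rw [abs_mul, abs_two]
          linarith [hd]
  nlinarith [abs_nonneg (y - x)]

lemma sin_c_one {n : ℕ} : Real.sin (2*π*(n:ℝ)^4*1) = 0 := by
  rw [show 2*π*(n:ℝ)^4*1 = ((2*n^4 : ℕ):ℝ)*π by push_cast; ring]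
  exact Real.sin_nat_mul_pi _

lemma v_zero {n : ℕ} (hn : 1 ≤ n) : v aa n 0 = b aa (n-1) := by
  rw [v_eq aa hn]
  simp

lemma v_one {n : ℕ} (hn : 1 ≤ n) : v aa n 1 = b aa (n-1) + 2 * aa n := by
  rw [v_eq aa hn, sin_c_one]
  ring

lemma w_zero {n : ℕ} (hn : 1 ≤ n) : w aa n 0 = b aa (n-1) + 2 * aa n := by
  rw [w_eq aa hn]
  simp

lemma w_one {n : ℕ} (hn : 1 ≤ n) : w aa n 1 = b aa n := by
  rw [w_eq aa hn, sin_c_one, b_succ hn]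
  ring

lemma v_cont {n : ℕ} (hn : 1 ≤ n) : Continuous (v aa n) := by
  have : v aa n = fun x => b aa (n-1) + aa n * (2 * x +
      sin (2*π*(n:ℝ)^4*x) * cos (2*π*(n:ℝ)^4*x) / (2*π*(n:ℝ)^4)) :=
    funext (v_eq aa hn)
  rw [this]
  continuity

lemma w_cont {n : ℕ} (hn : 1 ≤ n) : Continuous (w aa n) := by
  have : w aa n = fun x => b aa (n-1) + 2 * aa n + aa n * (2 * x -
      sin (2*π*(n:ℝ)^4*x) * cos (2*π*(n:ℝ)^4*x) / (2*π*(n:ℝ)^4)) :=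
    funext (w_eq aa hn)
  rw [this]
  continuity

/-- Key lemma: every point of `[0,1)` is in the image of some inverse branch which is
a `1/4`-contraction mapping `[0,1)` into itself. -/
lemma exists_branch (T : ℝ → ℝ) (hT : InverseBranches aa 4 T) {z : ℝ}
    (hz : z ∈ Ico (0:ℝ) 1) :
    ∃ g : ℝ → ℝ, (∀ t ∈ Ico (0:ℝ) 1, T (g t) = t ∧ g t ∈ Ico (0:ℝ) 1) ∧
      (∀ s t : ℝ, |g s - g t| ≤ (1/4) * |s - t|) ∧
      ∃ z' ∈ Ico (0:ℝ) 1, g z' = z := by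
  obtain ⟨hz0, hz1⟩ := hz
  by_cases hzb : z < binf aa
  · -- z lies in some interval [b_{n-1}, b_n)
    have hex : ∃ n, z < b aa n := (tendsto_b.eventually_const_lt hzb).exists
    classical
    set n := Nat.find hex with hndef
    have hlt : z < b aa n := Nat.find_spec hex
    have hn1 : 1 ≤ n := by
      by_contra h
      push_neg at h
      interval_cases n
      · rw [b] at hlt
        simp at hlt
        linarith
    have hge : b aa (n-1) ≤ z := by
      by_contra h
      push_neg at h
      exact absurd h (Nat.find_min hex (by omega))
    have ha := aa_pos hn1
    have hbn : b aa n = b aa (n-1) + 4 * aa n := b_succ hn1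
    have hbinf1 : binf aa < 1 := lt_of_le_of_lt binf_le (by norm_num)
    have hlim : ∀ t : ℝ, t ∈ Ico (0:ℝ) 1 → b aa n ≤ binf aa := fun _ _ => b_le_binf n
    have haale : aa n ≤ 1/100 := aa_le hn1
    by_cases hz2 : z < v aa n 1
    · -- use branch v
      refine ⟨v aa n, ?_, ?_, ?_⟩
      · intro t ht
        refine ⟨((hT.2 t ht).1 n hn1).1, ?_, ?_⟩
        · have h1 := v_lb hn1 ht.1
          rw [v_zero hn1] at h1
          have := b_nonneg (n-1)
          nlinarith [ht.1, mul_nonneg ha.le ht.1]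
        · have h1 := v_lb hn1 ht.2.le
          rw [v_one hn1] at h1
          have h2 := b_le_binf n
          rw [hbn] at h2
          nlinarith [ht.2, mul_nonneg ha.le (sub_nonneg.2 ht.2.le)]
      · intro s t
        have h := v_lip hn1 t s
        have : 3 * aa n ≤ 1/4 := by linarith
        calc |v aa n s - v aa n t| ≤ 3 * aa n * |s - t| := h
          _ ≤ (1/4) * |s - t| := by nlinarith [abs_nonneg (s - t)]
      · have hIvt := intermediate_value_Ico (by norm_num : (0:ℝ) ≤ 1)
          ((v_cont hn1).continuousOn (s := Icc 0 1))
        have hzmem : z ∈ Ico (v aa n 0) (v aa n 1) := by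
          rw [v_zero hn1]
          exact ⟨hge, hz2⟩
        obtain ⟨z', hz', hvz'⟩ := hIvt hzmem
        exact ⟨z', hz', hvz'⟩
    · -- use branch w
      push_neg at hz2
      rw [v_one hn1] at hz2
      refine ⟨w aa n, ?_, ?_, ?_⟩
      · intro t ht
        refine ⟨((hT.2 t ht).1 n hn1).2, ?_, ?_⟩
        · have h1 := w_lb hn1 ht.1
          rw [w_zero hn1] at h1
          have := b_nonneg (n-1)
          nlinarith [ht.1, mul_nonneg ha.le ht.1]
        · have h1 := w_lb hn1 ht.2.le
          rw [w_one hn1] at h1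
          have h2 := b_le_binf n
          nlinarith [ht.2, mul_nonneg ha.le (sub_nonneg.2 ht.2.le)]
      · intro s t
        have h := w_lip hn1 t s
        have : 3 * aa n ≤ 1/4 := by linarith
        calc |w aa n s - w aa n t| ≤ 3 * aa n * |s - t| := h
          _ ≤ (1/4) * |s - t| := by nlinarith [abs_nonneg (s - t)]
      · have hIvt := intermediate_value_Ico (by norm_num : (0:ℝ) ≤ 1)
          ((w_cont hn1).continuousOn (s := Icc 0 1))
        have hzmem : z ∈ Ico (w aa n 0) (w aa n 1) := by
          rw [w_zero hn1, w_one hn1]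
          exact ⟨hz2, hlt⟩
        obtain ⟨z', hz', hwz'⟩ := hIvt hzmem
        exact ⟨z', hz', hwz'⟩
  · -- z ∈ [binf, 1): use a branch u_j
    push_neg at hzb
    have hL := lenJ_pos
    have hL1 := lenJ_le_one
    have hsum : binf aa + lenJ aa = 1 := by rw [lenJ]; ring
    set r : ℝ := (z - binf aa) / (lenJ aa / 4) with hrdef
    have hr0 : 0 ≤ r := by
      apply div_nonneg (by linarith) (by linarith)
    have hr4 : r < 4 := by
      rw [hrdef, div_lt_iff₀ (by linarith)]
      linarith
    set k : ℤ := ⌊r⌋ with hkdef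
    have hk0 : 0 ≤ k := Int.floor_nonneg.2 hr0
    have hk3 : k ≤ 3 := by
      have : k < 4 := by
        rw [hkdef]
        exact_mod_cast Int.floor_lt.2 (by exact_mod_cast hr4)
      omega
    set j : ℕ := k.toNat + 1 with hjdef
    have hj1 : 1 ≤ j := Nat.le_add_left 1 _
    have hj4 : j ≤ 4 := by omega
    have hkk : ((k.toNat : ℕ) : ℝ) = (k:ℝ) := by exact_mod_cast Int.toNat_of_nonneg hk0
    have hkt3 : ((k.toNat : ℕ) : ℝ) ≤ 3 := by rw [hkk]; exact_mod_cast hk3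
    have hjr : ((j:ℝ) - 1) = (k:ℝ) := by
      rw [hjdef]
      push_cast
      rw [hkk]
      ring
    have hjR1 : (0:ℝ) ≤ (j:ℝ) - 1 := by rw [hjr]; exact_mod_cast hk0
    have hjR4 : (j:ℝ) - 1 ≤ 3 := by rw [hjr]; exact_mod_cast hk3
    refine ⟨u aa 4 j, ?_, ?_, ?_⟩
    · intro t ht
      refine ⟨(hT.2 t ht).2 j hj1 hj4, ?_, ?_⟩
      · rw [u]
        have : (0:ℝ) ≤ ((j:ℝ)-1) * (lenJ aa / (4:ℕ)) := by
          apply mul_nonneg hjR1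
          positivity
        have ht0 := ht.1
        have hb0 := binf_nonneg
        have : (0:ℝ) ≤ (lenJ aa / (4:ℕ)) * t := by positivity
        push_cast at *
        nlinarith
      · rw [u]
        push_cast
        nlinarith [mul_le_mul_of_nonneg_right hkt3 (by linarith : (0:ℝ) ≤ lenJ aa/4),
          mul_lt_mul_of_pos_left ht.2 (by linarith : (0:ℝ) < lenJ aa/4), hsum]
    · intro s t
      rw [u, u]
      have : u aa 4 j s - u aa 4 j t = (lenJ aa/(4:ℕ)) * (s - t) := by rw [u, u]; ring
      rw [show binf aa + ((j:ℝ) - 1) * (lenJ aa / (4:ℕ)) + lenJ aa / (4:ℕ) * s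
          - (binf aa + ((j:ℝ) - 1) * (lenJ aa / (4:ℕ)) + lenJ aa / (4:ℕ) * t)
          = (lenJ aa/(4:ℕ)) * (s - t) by ring, abs_mul]
      have h4 : |lenJ aa/((4:ℕ):ℝ)| = lenJ aa / 4 := by
        rw [abs_of_pos]
        · norm_num
        · push_cast
          linarith
      rw [h4]
      nlinarith [abs_nonneg (s - t)]
    · refine ⟨Int.fract r, ⟨Int.fract_nonneg r, Int.fract_lt_one r⟩, ?_⟩
      rw [u, hjr]
      have : Int.fract r = r - (k:ℝ) := by rw [Int.fract, hkdef]
      rw [this]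
      have hLL : lenJ aa / ((4:ℕ):ℝ) = lenJ aa / 4 := by norm_num
      rw [hLL]
      have hrz : (lenJ aa / 4) * r = z - binf aa := by
        rw [hrdef]
        field_simp
      linear_combination hrz

lemma approx (T : ℝ → ℝ) (hT : InverseBranches aa 4 T) {x : ℝ} (hx : x ∈ Ico (0:ℝ) 1) :
    ∀ m : ℕ, ∀ z ∈ Ico (0:ℝ) 1,
      ∃ y ∈ Ico (0:ℝ) 1, T^[m] y = x ∧ |y - z| ≤ (1/4:ℝ)^m := by
  intro m
  induction m with
  | zero =>
    intro z hz
    refine ⟨x, hx, rfl, ?_⟩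
    rw [pow_zero, abs_le]
    constructor <;> [linarith [hx.1, hz.2]; linarith [hx.2, hz.1]]
  | succ m ih =>
    intro z hz
    obtain ⟨g, hg1, hg2, z', hz', hgz⟩ := exists_branch T hT hz
    obtain ⟨y', hy', hTy', hdist⟩ := ih z' hz'
    refine ⟨g y', (hg1 y' hy').2, ?_, ?_⟩
    · rw [Function.iterate_succ_apply, (hg1 y' hy').1]
      exact hTy'
    · calc |g y' - z| = |g y' - g z'| := by rw [hgz]
        _ ≤ (1/4) * |y' - z'| := hg2 y' z'
        _ ≤ (1/4) * (1/4:ℝ)^m := by linarith [abs_nonneg (y' - z')]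
        _ = (1/4:ℝ)^(m+1) := by rw [pow_succ]; ring


/-- with `a_n = 1/(100 n³)` and `N = 4`, for every `x ∈ [0,1)` the set
of preimages `⋃_{m≥1} T^{-m}(x)` meets every nonempty open subinterval of `[0,1)`. -/
theorem stmt14 (T : ℝ → ℝ) (hT : InverseBranches aa 4 T) :
    ∀ x ∈ Ico (0:ℝ) 1, ∀ c d : ℝ, 0 ≤ c → c < d → d ≤ 1 →
      ∃ m : ℕ, 1 ≤ m ∧ ∃ y ∈ Ioo c d, T^[m] y = x := by
  intro x hx c d hc hcd hd1
  set z : ℝ := (c + d) / 2 with hzdef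
  have hz : z ∈ Ico (0:ℝ) 1 := ⟨by linarith, by linarith⟩
  obtain ⟨m0, hm0⟩ := exists_pow_lt_of_lt_one (by linarith : (0:ℝ) < (d - c)/2)
    (by norm_num : (1/4:ℝ) < 1)
  set m := m0 + 1 with hmdef
  have hm1 : (1/4:ℝ)^m ≤ (1/4:ℝ)^m0 :=
    pow_le_pow_of_le_one (by norm_num) (by norm_num) (Nat.le_succ m0)
  obtain ⟨y, hy, hTy, hdist⟩ := approx T hT hx m z hz
  refine ⟨m, Nat.le_add_left 1 m0, y, ?_, hTy⟩
  have habs := abs_le.1 hdist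
  constructor
  · nlinarith [habs.1]
  · nlinarith [habs.2]

end Gouezel
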